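/- Let G be a chordal graph with terminal set T ⊆ V(G), let k be a nonnegative integer, and let t ∈ T be a simplicial vertex of G with closed neighbourhood C = N[t] = {t, x, y, z} of size four. If G has a subset feedback vertex set with respect to T of size at most k that contains at least two vertices of C, then G has a subset feedback vertex set with respect to T of size at most k that does not contain t. -/

import Mathlib

open SimpleGraph

variable {V : Type*}

/-- A `T`-triangle, represented as its vertex set: three pairwise adjacent
vertices at least one of which is a terminal. -/
def IsTTriangle (G : SimpleGraph V) (T Δ : Set V) : Prop :=
  ∃ a b c : V, Δ = {a, b, c} ∧ G.Adj a b ∧ G.Adj a c ∧ G.Adj b c ∧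
    (a ∈ T ∨ b ∈ T ∨ c ∈ T)

/-- The induced subgraph `G − S` contains a `T`-triangle. -/
def HasTTriangleAvoiding (G : SimpleGraph V) (T S : Set V) : Prop :=
  ∃ Δ : Set V, IsTTriangle G T Δ ∧ Δ ∩ S = ∅

/-- The induced subgraph `G − S` contains a `T`-cycle: a cycle of `G` avoiding
`S` and passing through a vertex of `T`. -/
def HasTCycleAvoiding (G : SimpleGraph V) (T S : Set V) : Prop :=
  ∃ (v : V) (c : G.Walk v v), c.IsCycle ∧ (∀ x ∈ c.support, x ∉ S) ∧
    ∃ t ∈ T, t ∈ c.support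

/-- `S` is a subset feedback vertex set of `G` with respect to `T`:
`G − S` contains no `T`-cycle. -/
def IsSubsetFVS (G : SimpleGraph V) (T S : Set V) : Prop :=
  ¬ HasTCycleAvoiding G T S

/-- A cycle has a chord: an edge of `G` between two vertices of the cycle
which is not an edge of the cycle. -/
def WalkHasChord (G : SimpleGraph V) {v : V} (c : G.Walk v v) : Prop :=
  ∃ x y : V, x ∈ c.support ∧ y ∈ c.support ∧ G.Adj x y ∧ s(x, y) ∉ c.edges

/-- A graph is chordal if every cycle of length at least four has a chord. -/
def Chordal (G : SimpleGraph V) : Prop :=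
  ∀ (v : V) (c : G.Walk v v), c.IsCycle → 4 ≤ c.length → WalkHasChord G c

/-- A bridge: an edge lying on no cycle of the graph. -/
def IsBridgeEdge (G : SimpleGraph V) (e : Sym2 V) : Prop :=
  e ∈ G.edgeSet ∧ ∀ (v : V) (c : G.Walk v v), c.IsCycle → e ∉ c.edges

/-- `(K, I)` is a split partition of `G`: `K` is a clique, `I` an independent
set, and they partition the vertex set. -/
def IsSplitPartition (G : SimpleGraph V) (K I : Set V) : Prop :=
  K ∪ I = Set.univ ∧ K ∩ I = ∅ ∧ G.IsClique K ∧ I.Pairwise fun a b => ¬ G.Adj a b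

/-- The closed neighbourhood `N[v]` of a vertex. -/
def closedNbhd (G : SimpleGraph V) (v : V) : Set V := insert v (G.neighborSet v)

/-- A vertex is simplicial if its closed neighbourhood is a clique. -/
def IsSimplicial (G : SimpleGraph V) (v : V) : Prop := G.IsClique (closedNbhd G v)

/-- A maximal clique. -/
def IsMaxClique (G : SimpleGraph V) (C : Set V) : Prop :=
  G.IsClique C ∧ ∀ C' : Set V, G.IsClique C' → C ⊆ C' → C' = C

/-- A matching, as a set of edges of `G` no two of which share an endvertex. -/
def IsEdgeMatching (G : SimpleGraph V) (M : Set (Sym2 V)) : Prop :=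
  M ⊆ G.edgeSet ∧ ∀ e ∈ M, ∀ f ∈ M, e ≠ f → ∀ z : V, z ∈ e → z ∉ f

/-- A set of edges saturates a vertex if some edge of it is incident with it. -/
def Saturates (M : Set (Sym2 V)) (z : V) : Prop := ∃ e ∈ M, z ∈ e

/-- `M` is a `t`-expansion of `X` into `Y`: every edge of `M` goes between `X`
and `Y`, every vertex of `X` is incident with exactly `t` edges of `M`, and the
edges of `M` are incident with exactly `t * |X|` distinct vertices of `Y`. -/
def IsExpansion (G : SimpleGraph V) (t : ℕ) (X Y : Set V) (M : Set (Sym2 V)) : Prop :=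
  M ⊆ G.edgeSet ∧ (∀ e ∈ M, ∃ x ∈ X, ∃ y ∈ Y, e = s(x, y)) ∧
    (∀ x ∈ X, {e ∈ M | x ∈ e}.ncard = t) ∧
    {y ∈ Y | Saturates M y}.ncard = t * X.ncard



lemma cycle_nbrs {G : SimpleGraph V} {t : V} (c : G.Walk t t) (hc : c.IsCycle) :
    ∃ u w : V, G.Adj t u ∧ G.Adj t w ∧ u ≠ w ∧ u ∈ c.support ∧ w ∈ c.support := by
  cases c with
  | nil => exact absurd rfl hc.ne_nil
  | @cons _ u _ h p =>
    have hpnil : ¬ p.Nil := Walk.not_nil_of_ne (Ne.symm h.ne)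
    have hrnil : ¬ p.reverse.Nil := by
      rwa [Walk.nil_iff_length_eq, Walk.length_reverse, ← Walk.nil_iff_length_eq]
    obtain ⟨w, h', q, hq⟩ := Walk.not_nil_iff.mp hrnil
    refine ⟨u, w, h, h', ?_, ?_, ?_⟩
    · rintro rfl
      have hedge : s(t, u) ∈ p.edges := by
        have : s(t, u) ∈ p.reverse.edges := by rw [hq]; simp
        rwa [Walk.edges_reverse, List.mem_reverse] at this
      have := hc.isTrail.edges_nodup
      simp only [Walk.edges_cons, List.nodup_cons] at this
      exact this.1 hedge
    · simp
    · have : w ∈ p.reverse.support := by rw [hq]; simp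
      rw [Walk.support_reverse, List.mem_reverse] at this
      simp [this]

lemma triple_ncard_le (p q r : V) : ({p, q, r} : Set V).ncard ≤ 3 := by
  calc ({p, q, r} : Set V).ncard ≤ ({q, r} : Set V).ncard + 1 := Set.ncard_insert_le _ _
    _ ≤ (({r} : Set V).ncard + 1) + 1 := by
        have := Set.ncard_insert_le q ({r} : Set V)
        omega
    _ ≤ 3 := by simp [Set.ncard_singleton]

lemma ncard_triple_ne_four {a b c : V} : ({a, b, c} : Set V).ncard ≠ 4 := by
  have := triple_ncard_le a b c; omega

lemma four_distinct {t x y z : V} (hcard : ({t, x, y, z} : Set V).ncard = 4) :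
    t ≠ x ∧ t ≠ y ∧ t ≠ z ∧ x ≠ y ∧ x ≠ z ∧ y ≠ z := by
  refine ⟨?_, ?_, ?_, ?_, ?_, ?_⟩ <;> rintro rfl
  · rw [show ({t, t, y, z} : Set V) = {t, y, z} from by ext; simp] at hcard
    exact ncard_triple_ne_four hcard
  · rw [show ({t, x, t, z} : Set V) = {t, x, z} from by ext; simp; tauto] at hcard
    exact ncard_triple_ne_four hcard
  · rw [show ({t, x, y, t} : Set V) = {t, x, y} from by ext; simp; tauto] at hcard
    exact ncard_triple_ne_four hcard
  · rw [show ({t, x, x, z} : Set V) = {t, x, z} from by ext; simp] at hcard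
    exact ncard_triple_ne_four hcard
  · rw [show ({t, x, y, x} : Set V) = {t, x, y} from by ext; simp; tauto] at hcard
    exact ncard_triple_ne_four hcard
  · rw [show ({t, x, y, y} : Set V) = {t, x, y} from by ext; simp] at hcard
    exact ncard_triple_ne_four hcard


lemma pigeon3 {V : Type} {x y z u w a b : V}
    (hu : u = x ∨ u = y ∨ u = z) (hw : w = x ∨ w = y ∨ w = z)
    (ha : a = x ∨ a = y ∨ a = z) (hb : b = x ∨ b = y ∨ b = z)
    (huw : u ≠ w) (hab : a ≠ b) (hua : u ≠ a) (hub : u ≠ b)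
    (hwa : w ≠ a) (hwb : w ≠ b) : False := by
  rcases hu with rfl | rfl | rfl <;> rcases hw with rfl | rfl | rfl <;>
    rcases ha with rfl | rfl | rfl <;> rcases hb with rfl | rfl | rfl <;> simp_all

/-- if a solution of size at most `k` contains two vertices of
the simplicial clique `{t, x, y, z}` of the terminal `t`, then there is a
solution of size at most `k` avoiding `t`. -/
theorem stmt14 {V : Type} [Fintype V] (G : SimpleGraph V) (T : Set V)
    (hG : Chordal G) (k : ℕ) (t x y z : V) (ht : t ∈ T)
    (hsimp : IsSimplicial G t)
    (hC : closedNbhd G t = {t, x, y, z})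
    (hcard : ({t, x, y, z} : Set V).ncard = 4)
    (hex : ∃ S : Set V, IsSubsetFVS G T S ∧ S.ncard ≤ k ∧
      2 ≤ (S ∩ {t, x, y, z}).ncard) :
    ∃ S : Set V, IsSubsetFVS G T S ∧ S.ncard ≤ k ∧ t ∉ S := by
  classical
  obtain ⟨S, hS, hk, hint⟩ := hex
  by_cases htS : t ∈ S
  · obtain ⟨htx, hty, htz, hxy, hxz, hyz⟩ := four_distinct hcard
    obtain ⟨a, haC, hat⟩ := Set.exists_ne_of_one_lt_ncard (s := S ∩ {t, x, y, z}) (by omega) t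
    have haS : a ∈ S := haC.1
    have haxyz : a = x ∨ a = y ∨ a = z := by
      have := haC.2; simp only [Set.mem_insert_iff, Set.mem_singleton_iff] at this
      tauto
    obtain ⟨b, hbxyz, hba⟩ : ∃ b, (b = x ∨ b = y ∨ b = z) ∧ b ≠ a := by
      rcases haxyz with rfl | rfl | rfl
      · exact ⟨y, Or.inr (Or.inl rfl), Ne.symm hxy⟩
      · exact ⟨z, Or.inr (Or.inr rfl), Ne.symm hyz⟩
      · exact ⟨x, Or.inl rfl, hxz⟩
    refine ⟨insert b (S \ {t}), ?_, ?_, ?_⟩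
    · -- subset-FVS
      intro hcyc
      obtain ⟨v, c, hc, havoid, t', ht'T, ht'sup⟩ := hcyc
      by_cases htc : t ∈ c.support
      · have hc' := hc.rotate htc
        have hsub : ∀ p, p ∈ (c.rotate t htc).support → p ∈ c.support := by
          intro p hp
          rw [Walk.support_eq_cons (c.rotate t htc), List.mem_cons] at hp
          rcases hp with rfl | hp'
          · exact htc
          · have := (Walk.support_rotate c t htc).perm.mem_iff.mp hp'
            rw [Walk.support_eq_cons c]
            exact List.mem_cons_of_mem _ this
        obtain ⟨u, w, hu, hw, huw, husup, hwsup⟩ := cycle_nbrs (c.rotate t htc) hc'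
        have memxyz : ∀ p, G.Adj t p → p = x ∨ p = y ∨ p = z := by
          intro p hp
          have hmem : p ∈ closedNbhd G t := Set.mem_insert_of_mem _ hp
          rw [hC] at hmem
          simp only [Set.mem_insert_iff, Set.mem_singleton_iff] at hmem
          rcases hmem with rfl | h
          · exact absurd hp (G.irrefl)
          · exact h
        have hbS' : b ∈ insert b (S \ {t}) := Set.mem_insert _ _
        have haS' : a ∈ insert b (S \ {t}) := Set.mem_insert_of_mem _ ⟨haS, hat⟩
        have huS' := havoid u (hsub u husup)
        have hwS' := havoid w (hsub w hwsup)
        exact pigeon3 (memxyz u hu) (memxyz w hw) haxyz hbxyz huw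
          (Ne.symm hba) (fun h => huS' (h ▸ haS')) (fun h => huS' (h ▸ hbS'))
          (fun h => hwS' (h ▸ haS')) (fun h => hwS' (h ▸ hbS'))
      · refine hS ⟨v, c, hc, ?_, t', ht'T, ht'sup⟩
        intro p hp hpS
        have hpt : p ≠ t := fun h => htc (h ▸ hp)
        exact havoid p hp (Set.mem_insert_of_mem _ ⟨hpS, hpt⟩)
    · -- cardinality
      have h1 : (S \ {t}).ncard = S.ncard - 1 := Set.ncard_diff_singleton_of_mem htS
      have h2 := Set.ncard_insert_le b (S \ {t})
      have h3 : 0 < S.ncard := (Set.ncard_pos (Set.toFinite S)).mpr ⟨t, htS⟩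
      omega
    · -- t avoided
      intro htmem
      rcases htmem with h | h
      · rcases hbxyz with rfl | rfl | rfl
        · exact htx h
        · exact hty h
        · exact htz h
      · exact h.2 rfl
  · exact ⟨S, hS, hk, htS⟩
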